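/- Under the hypotheses of Lemma 1 and assuming additionally that with probability at least 1 − (δ + γ), {Φ_j(f_u, P_XY) : u ∈ U} ⊆ [inf_{f∈R̂} Φ_j(f, D) − α, sup_{f∈R̂} Φ_j(f, D) + α], it follows that with probability at least 1 − (δ + γ), Φ_j(g*, P_U) ∈ [inf_{f∈R̂} Φ_j(f, D) − τ_j − α, sup_{f∈R̂} Φ_j(f, D) + τ_j + α]. -/
import Mathlib


open MeasureTheory

/-- Theorem 4: under the hypotheses of Lemma 1, if with probability at
least `1 - (δ + γ)` every submodel marginal VI `Φmarg u` lies in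
`[inf_{f ∈ R̂} Φemp f - α, sup_{f ∈ R̂} Φemp f + α]`, then with probability at least
`1 - (δ + γ)` the true-model VI `ΦgStar` lies in the `τ`-widened interval
`[inf_{f ∈ R̂} Φemp f - τ - α, sup_{f ∈ R̂} Φemp f + τ + α]`. -/
theorem stmt11 {Ω U M : Type*} [MeasurableSpace Ω] [Fintype U] [Nonempty U]
    (μ : Measure Ω) [IsProbabilityMeasure μ]
    (p : U → ℝ) (hp0 : ∀ u, 0 ≤ p u) (hp1 : ∀ u, p u ≤ 1) (hsum : ∑ u, p u = 1)
    (ΦgStar : ℝ) (Φcond Φcomp Φmarg : U → ℝ) (τ : ℝ) (hτ : 0 ≤ τ)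
    (htarget : ΦgStar = ∑ u, p u * Φcond u)
    (hmix : ∀ u, Φmarg u = p u * Φcond u + (1 - p u) * Φcomp u)
    (hdrift : ∀ u, |Φcond u - Φcomp u| ≤ τ)
    (Rhat : Ω → Finset M) (hne : ∀ ω, (Rhat ω).Nonempty)
    (Φemp : M → Ω → ℝ) (α : ℝ) (hα : 0 ≤ α)
    (δ γ : ℝ) (hδ : 0 ≤ δ) (hγ : 0 ≤ γ)
    (hcover : (μ {ω | ∀ u, Φmarg u ∈
        Set.Icc ((Rhat ω).inf' (hne ω) (fun f => Φemp f ω) - α)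
                ((Rhat ω).sup' (hne ω) (fun f => Φemp f ω) + α)}).toReal ≥ 1 - (δ + γ)) :
    (μ {ω | ΦgStar ∈
        Set.Icc ((Rhat ω).inf' (hne ω) (fun f => Φemp f ω) - τ - α)
                ((Rhat ω).sup' (hne ω) (fun f => Φemp f ω) + τ + α)}).toReal ≥
      1 - (δ + γ) := by
  refine le_trans hcover (ENNReal.toReal_mono (measure_ne_top μ _) (measure_mono ?_))
  intro ω hω
  simp only [Set.mem_setOf_eq, Set.mem_Icc] at hω ⊢
  set lo := (Rhat ω).inf' (hne ω) (fun f => Φemp f ω)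
  set hi := (Rhat ω).sup' (hne ω) (fun f => Φemp f ω)
  have hcond : ∀ u, lo - α - τ ≤ Φcond u ∧ Φcond u ≤ hi + α + τ := by
    intro u
    obtain ⟨h1, h2⟩ := hω u
    have hd : |Φcond u - Φmarg u| ≤ τ := by
      have : Φcond u - Φmarg u = (1 - p u) * (Φcond u - Φcomp u) := by
        rw [hmix u]; ring
      rw [this, abs_mul]
      calc |1 - p u| * |Φcond u - Φcomp u| ≤ 1 * τ := by
            apply mul_le_mul _ (hdrift u) (abs_nonneg _) zero_le_one
            rw [abs_le]; constructor <;> nlinarith [hp0 u, hp1 u]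
        _ = τ := one_mul τ
    rw [abs_le] at hd
    constructor <;> linarith [hd.1, hd.2]
  rw [htarget]
  constructor
  · calc lo - τ - α = ∑ u, p u * (lo - α - τ) := by
          rw [← Finset.sum_mul, hsum]; ring
      _ ≤ ∑ u, p u * Φcond u :=
          Finset.sum_le_sum fun u _ => mul_le_mul_of_nonneg_left (hcond u).1 (hp0 u)
  · calc ∑ u, p u * Φcond u ≤ ∑ u, p u * (hi + α + τ) :=
          Finset.sum_le_sum fun u _ => mul_le_mul_of_nonneg_left (hcond u).2 (hp0 u)
      _ = hi + τ + α := by rw [← Finset.sum_mul, hsum]; ring
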